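/- arXiv:1411.4984 — 6 statements merged into one kernel-verified Lean document; each statement's English description precedes it below -/
import Mathlib

section
/- The generalized Sugeno integral satisfies I_S(μ, f+a) ≤ I_S(μ, f) + a for all a ∈ [0,1], all capacities μ, and all measurable f : X → [0,1] with f + a ∈ [0,1], if and only if the semicopula S satisfies S(c+a, b) ≤ S(c, b) + a for all a, b, c ∈ [0,1] with a + c ≤ 1. -/
open Set

def Semicopula (S : ℝ → ℝ → ℝ) : Prop :=
  (∀ x ∈ Icc (0:ℝ) 1, ∀ y ∈ Icc (0:ℝ) 1, S x y ∈ Icc (0:ℝ) 1) ∧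
  (∀ x ∈ Icc (0:ℝ) 1, ∀ y ∈ Icc (0:ℝ) 1, ∀ y' ∈ Icc (0:ℝ) 1, y ≤ y' → S x y ≤ S x y') ∧
  (∀ y ∈ Icc (0:ℝ) 1, ∀ x ∈ Icc (0:ℝ) 1, ∀ x' ∈ Icc (0:ℝ) 1, x ≤ x' → S x y ≤ S x' y) ∧
  (∀ x ∈ Icc (0:ℝ) 1, S x 1 = x ∧ S 1 x = x)

def Capacity {X : Type} (μ : Set X → ℝ) : Prop :=
  (∀ A : Set X, μ A ∈ Icc (0:ℝ) 1) ∧ (∀ A B : Set X, A ⊆ B → μ A ≤ μ B) ∧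
  μ (∅ : Set X) = 0 ∧ μ (univ : Set X) = 1

noncomputable def genInt {X : Type} (S : ℝ → ℝ → ℝ) (μ : Set X → ℝ) (f : X → ℝ) : ℝ :=
  ⨆ t : Icc (0:ℝ) 1, S (t:ℝ) (μ {x | (t:ℝ) ≤ f x})

def Comonotone {X : Type} (f g : X → ℝ) : Prop :=
  ∀ x y, 0 ≤ (f x - f y) * (g x - g y)

def Tcoseminorm (op : ℝ → ℝ → ℝ) : Prop :=
  ∃ S : ℝ → ℝ → ℝ, Semicopula S ∧
    ∀ x ∈ Icc (0:ℝ) 1, ∀ y ∈ Icc (0:ℝ) 1, op x y = 1 - S (1 - x) (1 - y)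

theorem stmt0 (S : ℝ → ℝ → ℝ) (hS : Semicopula S) :
    (∀ (X : Type) (μ : Set X → ℝ), Capacity μ → ∀ f : X → ℝ,
        (∀ x, f x ∈ Icc (0:ℝ) 1) → ∀ a ∈ Icc (0:ℝ) 1,
        (∀ x, f x + a ∈ Icc (0:ℝ) 1) →
        genInt S μ (fun x => f x + a) ≤ genInt S μ f + a) ↔
    (∀ a ∈ Icc (0:ℝ) 1, ∀ b ∈ Icc (0:ℝ) 1, ∀ c ∈ Icc (0:ℝ) 1, a + c ≤ 1 →
        S (c + a) b ≤ S c b + a) := by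
  obtain ⟨hbd, hmy, hmx, hun⟩ := hS
  have h00 : (0:ℝ) ∈ Icc (0:ℝ) 1 := ⟨le_refl 0, zero_le_one⟩
  have h01 : (1:ℝ) ∈ Icc (0:ℝ) 1 := ⟨zero_le_one, le_refl 1⟩
  have hS10 : S 1 0 = 0 := (hun 0 h00).2
  haveI : Nonempty (Icc (0:ℝ) 1) := ⟨⟨0, h00⟩⟩
  constructor
  · -- integral inequality → semicopula inequality
    intro H a ha b hb c hc hac
    classical
    set μ : Set Bool → ℝ := fun s => if s = ∅ then 0 else if s = univ then 1 else b with hμdef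
    set f : Bool → ℝ := fun x => if x = true then c else 0 with hfdef
    have huvne : (univ : Set Bool) ≠ ∅ := Ne.symm Set.empty_ne_univ
    have hftrue : f true = c := by simp [hfdef]
    have hffalse : f false = 0 := by simp [hfdef]
    have hμuniv : μ (univ : Set Bool) = 1 := by
      simp only [hμdef]
      rw [if_neg huvne]
      simp
    have hμ01 : ∀ A, μ A ∈ Icc (0:ℝ) 1 := by
      intro A
      simp only [hμdef]
      split_ifs <;> [exact h00; exact h01; exact hb]
    have hcap : Capacity μ := by
      refine ⟨hμ01, ?_, ?_, ?_⟩
      · intro A B hAB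
        by_cases hA : A = ∅
        · subst hA; simp only [hμdef, if_pos rfl]; exact (hμ01 B).1
        · by_cases hB : B = univ
          · subst hB
            rw [hμuniv]
            exact (hμ01 A).2
          · have hAu : A ≠ univ := fun h => hB (univ_subset_iff.mp (h ▸ hAB))
            have hBne : B ≠ ∅ := fun h => hA (subset_eq_empty hAB h)
            simp only [hμdef, if_neg hA, if_neg hAu, if_neg hBne, if_neg hB, le_refl]
      · simp only [hμdef, if_pos rfl]
      · exact hμuniv
    have hf01 : ∀ x, f x ∈ Icc (0:ℝ) 1 := by
      intro x; cases x
      · rw [hffalse]; exact h00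
      · rw [hftrue]; exact hc
    have hfa01 : ∀ x, f x + a ∈ Icc (0:ℝ) 1 := by
      intro x; cases x
      · rw [hffalse]; exact ⟨by linarith [ha.1], by simpa using ha.2⟩
      · rw [hftrue]; exact ⟨by linarith [hc.1, ha.1], by linarith⟩
    have key := H Bool μ hcap f hf01 a ha hfa01
    have hne : ({true} : Set Bool) ≠ ∅ := by simp
    have hnu : ({true} : Set Bool) ≠ univ := by
      intro h
      have hmem : false ∈ ({true} : Set Bool) := h ▸ mem_univ false
      simp at hmem
    have hμT : μ {true} = b := by
      simp only [hμdef, if_neg hne, if_neg hnu]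
    have hbddf : BddAbove (range fun t : Icc (0:ℝ) 1 => S t (μ {x | (t:ℝ) ≤ f x})) :=
      ⟨1, by rintro _ ⟨t, rfl⟩; exact (hbd t t.2 _ (hμ01 _)).2⟩
    have hbddfa : BddAbove (range fun t : Icc (0:ℝ) 1 => S t (μ {x | (t:ℝ) ≤ f x + a})) :=
      ⟨1, by rintro _ ⟨t, rfl⟩; exact (hbd t t.2 _ (hμ01 _)).2⟩
    -- genInt f ≤ S c b
    have hScb0 : 0 ≤ S c b := (hbd c hc b hb).1
    have hup : genInt S μ f ≤ S c b := by
      refine ciSup_le fun t => ?_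
      rcases eq_or_lt_of_le t.2.1 with h0 | h0
      · have hsu : {x : Bool | (t:ℝ) ≤ f x} = univ := by
          ext x; simp only [mem_setOf_eq, mem_univ, iff_true]
          exact le_trans (le_of_eq h0.symm) (hf01 x).1
        rw [hsu, hcap.2.2.2, (hun t t.2).1, ← h0]
        exact hScb0
      · by_cases htc : (t:ℝ) ≤ c
        · have hsu : {x : Bool | (t:ℝ) ≤ f x} = {true} := by
            ext x
            simp only [mem_setOf_eq, mem_singleton_iff]
            cases x
            · rw [hffalse]
              exact iff_of_false (by linarith) (by simp)
            · rw [hftrue]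
              exact iff_of_true htc rfl
          rw [hsu, hμT]
          exact hmx b hb t t.2 c hc htc
        · push_neg at htc
          have hsu : {x : Bool | (t:ℝ) ≤ f x} = ∅ := by
            ext x
            simp only [mem_setOf_eq, mem_empty_iff_false, iff_false]
            cases x
            · rw [hffalse]; linarith [hc.1]
            · rw [hftrue]; linarith
          rw [hsu, hcap.2.2.1]
          calc S (t:ℝ) 0 ≤ S 1 0 := hmx 0 h00 t t.2 1 h01 t.2.2
            _ = 0 := hS10
            _ ≤ S c b := hScb0
    -- S (c+a) b ≤ genInt (f + a)
    have hca : c + a ∈ Icc (0:ℝ) 1 := ⟨by linarith [hc.1, ha.1], by linarith⟩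
    have hdown : S (c + a) b ≤ genInt S μ (fun x => f x + a) := by
      have hμge : b ≤ μ {x : Bool | c + a ≤ f x + a} := by
        have hsu : {x : Bool | c + a ≤ f x + a} = {x : Bool | c ≤ f x} := by
          ext x; simp only [mem_setOf_eq]; constructor <;> intro h <;> linarith
        rw [hsu]
        rcases eq_or_lt_of_le hc.1 with h0 | h0
        · have huv : {x : Bool | c ≤ f x} = univ := by
            ext x; simp only [mem_setOf_eq, mem_univ, iff_true]
            exact le_trans (le_of_eq h0.symm) (hf01 x).1
          rw [huv, hcap.2.2.2]; exact hb.2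
        · have htr : {x : Bool | c ≤ f x} = {true} := by
            ext x
            simp only [mem_setOf_eq, mem_singleton_iff]
            cases x
            · rw [hffalse]
              exact iff_of_false (by linarith) (by simp)
            · rw [hftrue]
              exact iff_of_true le_rfl rfl
          rw [htr, hμT]
      calc S (c + a) b ≤ S (c + a) (μ {x : Bool | c + a ≤ f x + a}) :=
            hmy (c + a) hca b hb _ (hμ01 _) hμge
        _ ≤ genInt S μ (fun x => f x + a) := le_ciSup hbddfa ⟨c + a, hca⟩
    linarith
  · -- semicopula inequality → integral inequality
    intro H X μ hμ f hf a ha hfa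
    obtain ⟨hμ01, hμmono, hμ0, hμu⟩ := hμ
    have hbddf : BddAbove (range fun t : Icc (0:ℝ) 1 => S t (μ {x | (t:ℝ) ≤ f x})) :=
      ⟨1, by rintro _ ⟨t, rfl⟩; exact (hbd t t.2 _ (hμ01 _)).2⟩
    have hnn : 0 ≤ genInt S μ f :=
      le_trans (hbd 0 h00 _ (hμ01 _)).1 (le_ciSup hbddf ⟨0, h00⟩)
    refine ciSup_le fun t => ?_
    by_cases hta : (t:ℝ) ≤ a
    · calc S (t:ℝ) (μ {x | (t:ℝ) ≤ f x + a})
          ≤ S (t:ℝ) 1 := hmy t t.2 _ (hμ01 _) 1 h01 (hμ01 _).2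
        _ = t := (hun t t.2).1
        _ ≤ genInt S μ f + a := by linarith
    · push_neg at hta
      set c : ℝ := (t:ℝ) - a with hcdef
      have hcm : c ∈ Icc (0:ℝ) 1 := ⟨by simp only [hcdef]; linarith,
        by simp only [hcdef]; linarith [t.2.2, ha.1]⟩
      have hseq : {x | (t:ℝ) ≤ f x + a} = {x | c ≤ f x} := by
        ext x; simp only [mem_setOf_eq, hcdef]; constructor <;> intro h <;> linarith
      have hteq : (t:ℝ) = c + a := by simp [hcdef]
      rw [hseq, hteq]
      have h2 : S (c + a) (μ {x | c ≤ f x}) ≤ S c (μ {x | c ≤ f x}) + a :=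
        H a ha _ (hμ01 _) c hcm (by simp only [hcdef]; linarith [t.2.2])
      have h3 : S c (μ {x | c ≤ f x}) ≤ genInt S μ f := le_ciSup hbddf ⟨c, hcm⟩
      linarith
end

section
/- For semicopulas S₁, S₂, S₃, the inequality I_{S₁}(μ, (f+a)·1_A) ≤ I_{S₂}(μ, f·1_A) + I_{S₃}(μ, a·1_A) holds for all a ∈ [0,1], all measurable sets A, all capacities μ, and all measurable f : X → [0,1] with f + a ∈ [0,1], if and only if S₁(x+y, z) ≤ S₂(x, z) + S₃(y, z) for all x, y, z ∈ [0,1] with x + y ≤ 1. -/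
open Set

lemma sc_zero_left {S : ℝ → ℝ → ℝ} (hS : Semicopula S) {y : ℝ} (hy : y ∈ Icc (0:ℝ) 1) :
    S 0 y = 0 := by
  have h0 : (0:ℝ) ∈ Icc (0:ℝ) 1 := by norm_num
  have h1 : (1:ℝ) ∈ Icc (0:ℝ) 1 := by norm_num
  have ha : S 0 y ≤ S 0 1 := hS.2.1 0 h0 y hy 1 h1 hy.2
  have hb := (hS.2.2.2 0 h0).1
  have hc := (hS.1 0 h0 y hy).1
  linarith

lemma sc_zero_right {S : ℝ → ℝ → ℝ} (hS : Semicopula S) {x : ℝ} (hx : x ∈ Icc (0:ℝ) 1) :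
    S x 0 = 0 := by
  have h0 : (0:ℝ) ∈ Icc (0:ℝ) 1 := by norm_num
  have h1 : (1:ℝ) ∈ Icc (0:ℝ) 1 := by norm_num
  have ha : S x 0 ≤ S 1 0 := hS.2.2.1 0 h0 x hx 1 h1 hx.2
  have hb := (hS.2.2.2 0 h0).2
  have hc := (hS.1 x hx 0 h0).1
  linarith

instance : Nonempty (Icc (0:ℝ) 1) := ⟨⟨0, by norm_num⟩⟩

lemma genInt_bdd {X : Type} {S : ℝ → ℝ → ℝ} (hS : Semicopula S) {μ : Set X → ℝ}
    (hμ : Capacity μ) (f : X → ℝ) :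
    BddAbove (Set.range fun t : Icc (0:ℝ) 1 => S (t:ℝ) (μ {x | (t:ℝ) ≤ f x})) := by
  refine ⟨1, ?_⟩
  rintro _ ⟨t, rfl⟩
  exact (hS.1 t t.2 _ (hμ.1 _)).2

lemma le_genInt {X : Type} {S : ℝ → ℝ → ℝ} (hS : Semicopula S) {μ : Set X → ℝ}
    (hμ : Capacity μ) (f : X → ℝ) (t : Icc (0:ℝ) 1) :
    S (t:ℝ) (μ {x | (t:ℝ) ≤ f x}) ≤ genInt S μ f :=
  le_ciSup (genInt_bdd hS hμ f) t

lemma genInt_le {X : Type} {S : ℝ → ℝ → ℝ} {μ : Set X → ℝ} {f : X → ℝ} {c : ℝ}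
    (h : ∀ t : Icc (0:ℝ) 1, S (t:ℝ) (μ {x | (t:ℝ) ≤ f x}) ≤ c) :
    genInt S μ f ≤ c :=
  ciSup_le h

lemma genInt_nonneg {X : Type} {S : ℝ → ℝ → ℝ} (hS : Semicopula S) {μ : Set X → ℝ}
    (hμ : Capacity μ) (f : X → ℝ) : 0 ≤ genInt S μ f := by
  have := le_genInt hS hμ f ⟨0, by norm_num⟩
  have h0 := (hS.1 0 (by norm_num) _ (hμ.1 {x | (0:ℝ) ≤ f x})).1
  exact le_trans h0 this

-- upper bound for constant indicator
lemma genInt_indicator_const_le {X : Type} {S : ℝ → ℝ → ℝ} (hS : Semicopula S)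
    {μ : Set X → ℝ} (hμ : Capacity μ) (A : Set X) {c : ℝ} (hc : c ∈ Icc (0:ℝ) 1) :
    genInt S μ (A.indicator (fun _ => c)) ≤ S c (μ A) := by
  have hμA := hμ.1 A
  have hnn : 0 ≤ S c (μ A) := (hS.1 c hc _ hμA).1
  apply genInt_le
  rintro ⟨t, ht⟩
  dsimp only
  rcases eq_or_lt_of_le ht.1 with h0 | hpos
  · rw [← h0, sc_zero_left hS (hμ.1 _)]; exact hnn
  · rcases le_or_gt t c with hle | hgt
    · have hset : {x | t ≤ A.indicator (fun _ => c) x} = A := by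
        ext x
        simp only [Set.mem_setOf_eq, Set.indicator_apply]
        by_cases hx : x ∈ A <;> simp [hx, hle, not_le.mpr hpos]
      rw [hset]
      exact hS.2.2.1 _ hμA t ht c hc hle
    · have hset : {x | t ≤ A.indicator (fun _ => c) x} = (∅ : Set X) := by
        ext x
        simp only [Set.mem_setOf_eq, Set.indicator_apply, Set.mem_empty_iff_false, iff_false]
        by_cases hx : x ∈ A <;> simp [hx, not_le.mpr hgt, not_le.mpr hpos]
      rw [hset, hμ.2.2.1, sc_zero_right hS ht]
      exact hnn

lemma le_genInt_indicator_const {X : Type} {S : ℝ → ℝ → ℝ} (hS : Semicopula S)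
    {μ : Set X → ℝ} (hμ : Capacity μ) (A : Set X) {c : ℝ} (hc : c ∈ Icc (0:ℝ) 1) :
    S c (μ A) ≤ genInt S μ (A.indicator (fun _ => c)) := by
  rcases eq_or_lt_of_le hc.1 with h0 | hpos
  · rw [← h0, sc_zero_left hS (hμ.1 A)]
    exact genInt_nonneg hS hμ _
  · have hset : {x | c ≤ A.indicator (fun _ => c) x} = A := by
      ext x
      simp only [Set.mem_setOf_eq, Set.indicator_apply]
      by_cases hx : x ∈ A <;> simp [hx, not_le.mpr hpos]
    have := le_genInt hS hμ (A.indicator (fun _ => c)) ⟨c, hc⟩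
    rwa [hset] at this

theorem stmt2 (S1 S2 S3 : ℝ → ℝ → ℝ)
    (h1 : Semicopula S1) (h2 : Semicopula S2) (h3 : Semicopula S3) :
    (∀ (X : Type) (μ : Set X → ℝ), Capacity μ → ∀ (A : Set X) (f : X → ℝ),
        (∀ x, f x ∈ Icc (0:ℝ) 1) → ∀ a ∈ Icc (0:ℝ) 1,
        (∀ x, f x + a ∈ Icc (0:ℝ) 1) →
        genInt S1 μ (A.indicator (fun x => f x + a)) ≤
          genInt S2 μ (A.indicator f) + genInt S3 μ (A.indicator (fun _ => a))) ↔
    (∀ x ∈ Icc (0:ℝ) 1, ∀ y ∈ Icc (0:ℝ) 1, ∀ z ∈ Icc (0:ℝ) 1, x + y ≤ 1 →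
        S1 (x + y) z ≤ S2 x z + S3 y z) := by
  constructor
  · -- forward direction
    classical
    intro h x hx y hy z hz hxy
    set A : Set Bool := {true} with hA
    set μ : Set Bool → ℝ := fun B => if B = univ then 1 else if B = ∅ then 0 else z with hμdef
    have μeq : ∀ B : Set Bool, μ B = if B = univ then 1 else if B = ∅ then 0 else z :=
      fun B => rfl
    have hμval : ∀ B : Set Bool, μ B = 1 ∨ μ B = 0 ∨ μ B = z := by
      intro B
      rw [μeq B]
      split_ifs <;> tauto
    have hcap : Capacity μ := by
      refine ⟨?_, ?_, ?_, ?_⟩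
      · intro B
        rw [μeq B]
        split_ifs
        · norm_num
        · norm_num
        · exact hz
      · intro B C hBC
        by_cases hCu : C = univ
        · have hC : μ C = 1 := by rw [μeq C, if_pos hCu]
          rw [hC]
          rcases hμval B with hB | hB | hB <;> rw [hB] <;> linarith [hz.1, hz.2]
        · have hBu : B ≠ univ := fun hB => hCu (univ_subset_iff.mp (hB ▸ hBC))
          by_cases hBe : B = ∅
          · have hB : μ B = 0 := by rw [μeq B, if_neg hBu, if_pos hBe]
            rw [hB]
            rcases hμval C with hC | hC | hC <;> rw [hC] <;> linarith [hz.1, hz.2]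
          · have hCe : C ≠ ∅ := fun hC => hBe (subset_eq_empty hBC hC)
            rw [μeq B, μeq C, if_neg hBu, if_neg hBe, if_neg hCu, if_neg hCe]
      · rw [μeq ∅, if_neg (Set.empty_ne_univ : (∅ : Set Bool) ≠ univ), if_pos rfl]
      · rw [μeq univ, if_pos rfl]
    have hμA : μ A = z := by
      have h1' : A ≠ univ := by
        intro hAu
        have hfA : false ∈ A := hAu ▸ mem_univ false
        simp [hA] at hfA
      have h2' : A ≠ ∅ := by
        intro hAe
        have htA : true ∈ A := by simp [hA]
        rw [hAe] at htA
        exact htA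
      rw [μeq A, if_neg h1', if_neg h2']
    have hx' : ∀ b : Bool, (fun _ : Bool => x) b ∈ Icc (0:ℝ) 1 := fun _ => hx
    have hxy' : ∀ b : Bool, (fun _ : Bool => x) b + y ∈ Icc (0:ℝ) 1 :=
      fun _ => ⟨add_nonneg hx.1 hy.1, hxy⟩
    have key := h Bool μ hcap A (fun _ => x) hx' y hy hxy'
    have hxyI : x + y ∈ Icc (0:ℝ) 1 := ⟨add_nonneg hx.1 hy.1, hxy⟩
    have lb : S1 (x + y) z ≤ genInt S1 μ (A.indicator (fun b => (fun _ : Bool => x) b + y)) := by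
      have := le_genInt_indicator_const h1 hcap A hxyI
      rw [hμA] at this
      exact this
    have ub2 : genInt S2 μ (A.indicator (fun _ : Bool => x)) ≤ S2 x z := by
      have := genInt_indicator_const_le h2 hcap A hx
      rwa [hμA] at this
    have ub3 : genInt S3 μ (A.indicator (fun _ : Bool => y)) ≤ S3 y z := by
      have := genInt_indicator_const_le h3 hcap A hy
      rwa [hμA] at this
    calc S1 (x + y) z ≤ genInt S1 μ (A.indicator (fun b => (fun _ : Bool => x) b + y)) := lb
      _ ≤ genInt S2 μ (A.indicator (fun _ : Bool => x)) +
            genInt S3 μ (A.indicator (fun _ : Bool => y)) := key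
      _ ≤ S2 x z + S3 y z := add_le_add ub2 ub3
  · -- backward direction
    intro h X μ hμ A f hf a ha hfa
    apply genInt_le
    rintro ⟨t, ht⟩
    dsimp only
    set g := A.indicator (fun x => f x + a) with hg
    have I2nn : 0 ≤ genInt S2 μ (A.indicator f) := genInt_nonneg h2 hμ _
    have I3nn : 0 ≤ genInt S3 μ (A.indicator (fun _ => a)) := genInt_nonneg h3 hμ _
    rcases eq_or_lt_of_le ht.1 with h0 | hpos
    · rw [← h0, sc_zero_left h1 (hμ.1 _)]
      linarith
    · set s := min t a with hs
      set r := t - s with hr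
      have hsI : s ∈ Icc (0:ℝ) 1 := ⟨le_min (le_of_lt hpos) ha.1, le_trans (min_le_right _ _) ha.2⟩
      have hrI : r ∈ Icc (0:ℝ) 1 := by
        constructor
        · simp only [hr, sub_nonneg, hs]
          exact min_le_left _ _
        · have : r ≤ t := by simp only [hr]; linarith [hsI.1]
          exact le_trans this ht.2
      have hrs : r + s = t := by simp [hr]
      have hmem : ∀ x : X, t ≤ g x → x ∈ A := by
        intro x hx
        by_contra hxA
        rw [hg, Set.indicator_of_notMem hxA] at hx
        linarith
      have sub1 : {x | t ≤ g x} ⊆ {x | r ≤ A.indicator f x} := by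
        intro x hx
        have hxA := hmem x hx
        simp only [Set.mem_setOf_eq] at hx ⊢
        rw [hg, Set.indicator_of_mem hxA] at hx
        rw [Set.indicator_of_mem hxA]
        have h1' := (hf x).1
        rcases le_total t a with hta | hat
        · simp only [hr, hs, min_eq_left hta]
          linarith
        · simp only [hr, hs, min_eq_right hat]
          linarith
      have sub2 : {x | t ≤ g x} ⊆ {x | s ≤ A.indicator (fun _ => a) x} := by
        intro x hx
        have hxA := hmem x hx
        simp only [Set.mem_setOf_eq]
        rw [Set.indicator_of_mem hxA]
        exact min_le_right _ _
      set w := μ {x | t ≤ g x} with hw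
      have hwI : w ∈ Icc (0:ℝ) 1 := hμ.1 _
      have step1 : S1 t w ≤ S2 r w + S3 s w := by
        have := h r hrI s hsI w hwI (by rw [hrs]; exact ht.2)
        rwa [hrs] at this
      have step2 : S2 r w ≤ S2 r (μ {x | r ≤ A.indicator f x}) :=
        h2.2.1 r hrI w hwI _ (hμ.1 _) (hμ.2.1 _ _ sub1)
      have step3 : S3 s w ≤ S3 s (μ {x | s ≤ A.indicator (fun _ => a) x}) :=
        h3.2.1 s hsI w hwI _ (hμ.1 _) (hμ.2.1 _ _ sub2)
      have step2' : S2 r (μ {x | r ≤ A.indicator f x}) ≤ genInt S2 μ (A.indicator f) :=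
        le_genInt h2 hμ _ ⟨r, hrI⟩
      have step3' : S3 s (μ {x | s ≤ A.indicator (fun _ => a) x}) ≤
          genInt S3 μ (A.indicator (fun _ => a)) :=
        le_genInt h3 hμ _ ⟨s, hsI⟩
      linarith
end

section
/- For a semicopula S, the inequality I_S(μ, (f+a)·1_A) ≤ I_S(μ, f·1_A) + a·μ(A) holds for all a ∈ [0,1], measurable A, capacities μ, and measurable f with f + a ∈ [0,1], if and only if S(x+y, z) ≤ S(x, z) + y·z for all x, y, z ∈ [0,1] with x + y ≤ 1. -/
open Set

theorem stmt5 (S : ℝ → ℝ → ℝ) (hS : Semicopula S) :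
    (∀ (X : Type) (μ : Set X → ℝ), Capacity μ → ∀ (A : Set X) (f : X → ℝ),
        (∀ x, f x ∈ Icc (0:ℝ) 1) → ∀ a ∈ Icc (0:ℝ) 1,
        (∀ x, f x + a ∈ Icc (0:ℝ) 1) →
        genInt S μ (A.indicator (fun x => f x + a)) ≤
          genInt S μ (A.indicator f) + a * μ A) ↔
    (∀ x ∈ Icc (0:ℝ) 1, ∀ y ∈ Icc (0:ℝ) 1, ∀ z ∈ Icc (0:ℝ) 1, x + y ≤ 1 →
        S (x + y) z ≤ S x z + y * z) := by
  obtain ⟨hrange, hmono2, hmono1, hneut⟩ := hS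
  have h01 : (0:ℝ) ∈ Icc (0:ℝ) 1 := by norm_num
  have h11 : (1:ℝ) ∈ Icc (0:ℝ) 1 := by norm_num
  have hS0 : ∀ z ∈ Icc (0:ℝ) 1, S 0 z = 0 := by
    intro z hz
    have h1 := hmono2 0 h01 z hz 1 h11 hz.2
    have h2 := (hrange 0 h01 z hz).1
    have h3 := (hneut 0 h01).1
    linarith
  have hSz0 : ∀ t ∈ Icc (0:ℝ) 1, S t 0 = 0 := by
    intro t ht
    have h1 := hmono1 0 h01 t ht 1 h11 ht.2
    have h2 := (hrange t ht 0 h01).1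
    have h3 := (hneut 0 h01).2
    linarith
  haveI : Nonempty (Icc (0:ℝ) 1) := ⟨⟨0, h01⟩⟩
  have hbdd : ∀ (X : Type) (μ : Set X → ℝ), (∀ B : Set X, μ B ∈ Icc (0:ℝ) 1) →
      ∀ g : X → ℝ,
      BddAbove (range fun t : Icc (0:ℝ) 1 => S (t:ℝ) (μ {x | (t:ℝ) ≤ g x})) := by
    intro X μ hμ g
    refine ⟨1, ?_⟩
    rintro _ ⟨t, rfl⟩
    exact (hrange t t.2 _ (hμ _)).2
  constructor
  · intro h x hx y hy z hz hxy
    classical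
    set μ : Set Bool → ℝ := fun B => if B = univ then 1 else if B = ∅ then 0 else z
      with hμdef
    have hμval : ∀ B : Set Bool, B ≠ univ → B ≠ ∅ → μ B = z := by
      intro B h1 h2
      simp only [hμdef]
      rw [if_neg h1, if_neg h2]
    have hμuniv : μ univ = 1 := by
      simp only [hμdef]
      simp
    have hμempty : μ (∅ : Set Bool) = 0 := by
      simp only [hμdef]
      rw [if_neg (Set.empty_ne_univ)]
      simp
    have hμI : ∀ B : Set Bool, μ B ∈ Icc (0:ℝ) 1 := by
      intro B
      by_cases h1 : B = univ
      · rw [h1, hμuniv]; exact h11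
      by_cases h2 : B = ∅
      · rw [h2, hμempty]; exact h01
      · rw [hμval B h1 h2]; exact hz
    have hμcap : Capacity μ := by
      refine ⟨hμI, ?_, hμempty, hμuniv⟩
      intro B C hBC
      by_cases h1 : C = univ
      · rw [h1, hμuniv]; exact (hμI B).2
      by_cases h2 : C = ∅
      · have hB : B = ∅ := eq_empty_of_subset_empty (h2 ▸ hBC)
        rw [h2, hB]
      · rw [hμval C h1 h2]
        have hBu : B ≠ univ := by
          intro hB; exact h1 (univ_subset_iff.1 (hB ▸ hBC))
        by_cases h3 : B = ∅
        · rw [h3, hμempty]; exact hz.1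
        · rw [hμval B hBu h3]
    have hmemT : (true : Bool) ∈ ({true} : Set Bool) := mem_singleton true
    have hmemF : (false : Bool) ∉ ({true} : Set Bool) := by simp
    have hAne1 : ({true} : Set Bool) ≠ univ := by
      intro hA
      exact hmemF (hA ▸ mem_univ false)
    have hAne2 : ({true} : Set Bool) ≠ ∅ := by
      intro hA
      rw [hA] at hmemT
      exact hmemT
    have hμA : μ {true} = z := hμval _ hAne1 hAne2
    have hxy0 : (0:ℝ) ≤ x + y := add_nonneg hx.1 hy.1
    have key : genInt S μ (({true} : Set Bool).indicator (fun _ => x + y)) ≤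
        genInt S μ (({true} : Set Bool).indicator (fun _ => x)) + y * μ {true} :=
      h Bool μ hμcap {true} (fun _ => x) (fun _ => hx) y hy (fun _ => ⟨hxy0, hxy⟩)
    rcases eq_or_lt_of_le hxy0 with hpos | hpos
    · have hx0 : x = 0 := by linarith [hx.1, hy.1]
      have hy0 : y = 0 := by linarith [hx.1, hy.1]
      rw [hx0, hy0]; simp
    · have hlb : S (x + y) z ≤ genInt S μ (({true} : Set Bool).indicator (fun _ => x + y)) := by
        have hset : {w : Bool | x + y ≤ ({true} : Set Bool).indicator (fun _ => x + y) w}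
            = {true} := by
          ext w
          cases w
          · simp only [mem_setOf_eq, mem_singleton_iff, indicator_of_notMem hmemF]
            constructor
            · intro hh; linarith
            · intro hh; simp at hh
          · simp only [mem_setOf_eq, mem_singleton_iff, indicator_of_mem hmemT]
            simp
        have hle := le_ciSup (hbdd Bool μ hμI (({true} : Set Bool).indicator (fun _ => x + y)))
          (⟨x + y, ⟨hxy0, hxy⟩⟩ : Icc (0:ℝ) 1)
        rw [genInt]
        refine le_trans (le_of_eq ?_) hle
        show S (x + y) z = S (x + y) (μ {w : Bool | x + y ≤ _})
        rw [hset, hμA]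
      have hub : genInt S μ (({true} : Set Bool).indicator (fun _ => x)) ≤ S x z := by
        rw [genInt]
        apply ciSup_le
        rintro ⟨t, ht⟩
        show S t (μ {w : Bool | t ≤ ({true} : Set Bool).indicator (fun _ => x) w}) ≤ S x z
        rcases eq_or_lt_of_le ht.1 with h0 | h0
        · have hset : {w : Bool | t ≤ ({true} : Set Bool).indicator (fun _ => x) w} = univ := by
            ext w
            simp only [mem_setOf_eq, mem_univ, iff_true]
            cases w
            · rw [indicator_of_notMem hmemF]; linarith
            · rw [indicator_of_mem hmemT]; linarith [hx.1]
          rw [hset, hμuniv, ← h0, hS0 1 h11]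
          exact (hrange x hx z hz).1
        · by_cases htx : t ≤ x
          · have hset : {w : Bool | t ≤ ({true} : Set Bool).indicator (fun _ => x) w}
                = {true} := by
              ext w
              cases w
              · simp only [mem_setOf_eq, mem_singleton_iff, indicator_of_notMem hmemF]
                constructor
                · intro hh; linarith
                · intro hh; simp at hh
              · simp only [mem_setOf_eq, mem_singleton_iff, indicator_of_mem hmemT]
                simp [htx]
            rw [hset, hμA]
            exact hmono1 z hz t ht x hx htx
          · push_neg at htx
            have hset : {w : Bool | t ≤ ({true} : Set Bool).indicator (fun _ => x) w}
                = ∅ := by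
              ext w
              cases w
              · simp only [mem_setOf_eq, indicator_of_notMem hmemF, mem_empty_iff_false,
                  iff_false, not_le]
                linarith
              · simp only [mem_setOf_eq, indicator_of_mem hmemT, mem_empty_iff_false,
                  iff_false, not_le]
                linarith
            rw [hset, hμempty, hSz0 t ht]
            exact (hrange x hx z hz).1
      rw [hμA] at key
      linarith
  · intro h X μ hμ A f hf a ha hfa
    obtain ⟨hμI, hμmono, hμe, hμu⟩ := hμ
    have hInt_nonneg : 0 ≤ genInt S μ (A.indicator f) := by
      have h1 := le_ciSup (hbdd X μ hμI (A.indicator f)) (⟨0, h01⟩ : Icc (0:ℝ) 1)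
      have h2 : (0:ℝ) ≤ S 0 (μ {x | (0:ℝ) ≤ A.indicator f x}) :=
        (hrange 0 h01 _ (hμI _)).1
      rw [genInt]
      exact le_trans h2 h1
    have haA : 0 ≤ a * μ A := mul_nonneg ha.1 (hμI A).1
    conv_lhs => rw [genInt]
    apply ciSup_le
    rintro ⟨t, ht⟩
    set E := {x | t ≤ A.indicator (fun x => f x + a) x} with hE
    have hEA : 0 < t → E ⊆ A := by
      intro ht0 x hxE
      by_contra hxA
      rw [hE, mem_setOf_eq, indicator_of_notMem hxA] at hxE
      linarith
    show S t (μ E) ≤ genInt S μ (A.indicator f) + a * μ A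
    by_cases hta : t ≤ a
    · have h1 : S t (μ E) ≤ S 0 (μ E) + t * μ E := by
        have := h 0 h01 t ht (μ E) (hμI E) (by linarith [ht.2])
        simpa using this
      rw [hS0 _ (hμI E)] at h1
      have h2 : t * μ E ≤ a * μ A := by
        rcases eq_or_lt_of_le ht.1 with h0 | h0
        · rw [← h0]; simpa using haA
        · exact mul_le_mul hta (hμmono _ _ (hEA h0)) (hμI E).1 ha.1
      linarith
    · push_neg at hta
      have hs : t - a ∈ Icc (0:ℝ) 1 := ⟨by linarith, by linarith [ht.2, ha.1]⟩
      have hEF : E ⊆ {x | t - a ≤ A.indicator f x} := by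
        intro x hxE
        rw [hE, mem_setOf_eq] at hxE
        by_cases hxA : x ∈ A
        · rw [indicator_of_mem hxA] at hxE
          rw [mem_setOf_eq, indicator_of_mem hxA]
          linarith
        · rw [indicator_of_notMem hxA] at hxE
          exfalso; linarith [ha.1]
      have hμEF := hμmono _ _ hEF
      have hμEA := hμmono _ _ (hEA (by linarith [ha.1]))
      have h1 : S t (μ E) ≤ S (t - a) (μ E) + a * μ E := by
        have h1' := h (t - a) hs a ha (μ E) (hμI E) (by linarith [ht.2])
        have hsa : t - a + a = t := by ring
        rwa [hsa] at h1'
      have h2 : S (t - a) (μ E) ≤ S (t - a) (μ {x | t - a ≤ A.indicator f x}) :=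
        hmono2 (t - a) hs _ (hμI _) _ (hμI _) hμEF
      have h3 : S (t - a) (μ {x | t - a ≤ A.indicator f x}) ≤ genInt S μ (A.indicator f) := by
        have hle := le_ciSup (hbdd X μ hμI (A.indicator f)) (⟨t - a, hs⟩ : Icc (0:ℝ) 1)
        rw [genInt]
        exact hle
      have h4 : a * μ E ≤ a * μ A := mul_le_mul_of_nonneg_left hμEA ha.1
      linarith
end

section
/- For any semicopula S, any capacity μ, and any comonotone measurable functions f, g : X → [0,1], the generalized Sugeno integral satisfies I_S(μ, max(f, g)) = max(I_S(μ, f), I_S(μ, g)). -/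
open Set

theorem stmt6 {X : Type} (S : ℝ → ℝ → ℝ) (hS : Semicopula S)
    (μ : Set X → ℝ) (hμ : Capacity μ) (f g : X → ℝ)
    (hf : ∀ x, f x ∈ Icc (0:ℝ) 1) (hg : ∀ x, g x ∈ Icc (0:ℝ) 1)
    (hfg : Comonotone f g) :
    genInt S μ (fun x => max (f x) (g x)) = max (genInt S μ f) (genInt S μ g) := by
  obtain ⟨hSrange, hSmono2, _, _⟩ := hS
  obtain ⟨hμrange, hμmono, _, _⟩ := hμ
  have key : ∀ t : Icc (0:ℝ) 1,
      S (t:ℝ) (μ {x | (t:ℝ) ≤ max (f x) (g x)}) =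
      max (S (t:ℝ) (μ {x | (t:ℝ) ≤ f x})) (S (t:ℝ) (μ {x | (t:ℝ) ≤ g x})) := by
    intro t
    set A := {x | (t:ℝ) ≤ f x} with hA
    set B := {x | (t:ℝ) ≤ g x} with hB
    have hunion : {x | (t:ℝ) ≤ max (f x) (g x)} = A ∪ B := by
      ext x; simp [hA, hB, le_max_iff]
    have hnest : A ⊆ B ∨ B ⊆ A := by
      by_contra h
      push_neg at h
      obtain ⟨a, ha, hna⟩ := Set.not_subset.mp h.1
      obtain ⟨b, hb, hnb⟩ := Set.not_subset.mp h.2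
      simp only [hA, hB, Set.mem_setOf_eq] at ha hna hb hnb
      push_neg at hna hnb
      have := hfg a b
      nlinarith
    rw [hunion]
    rcases hnest with hsub | hsub
    · rw [Set.union_eq_self_of_subset_left hsub]
      exact (max_eq_right (hSmono2 _ t.2 _ (hμrange A) _ (hμrange B) (hμmono _ _ hsub))).symm
    · rw [Set.union_eq_self_of_subset_right hsub]
      exact (max_eq_left (hSmono2 _ t.2 _ (hμrange B) _ (hμrange A) (hμmono _ _ hsub))).symm
  have hne : Nonempty (Icc (0:ℝ) 1) := ⟨⟨0, by norm_num⟩⟩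
  have bdd : ∀ h : X → ℝ, BddAbove
      (Set.range fun t : Icc (0:ℝ) 1 => S (t:ℝ) (μ {x | (t:ℝ) ≤ h x})) := by
    intro h
    refine ⟨1, ?_⟩
    rintro _ ⟨t, rfl⟩
    exact (hSrange _ t.2 _ (hμrange _)).2
  have bddmax : BddAbove (Set.range fun t : Icc (0:ℝ) 1 =>
      max (S (t:ℝ) (μ {x | (t:ℝ) ≤ f x})) (S (t:ℝ) (μ {x | (t:ℝ) ≤ g x}))) := by
    refine ⟨1, ?_⟩
    rintro _ ⟨t, rfl⟩
    exact max_le (hSrange _ t.2 _ (hμrange _)).2 (hSrange _ t.2 _ (hμrange _)).2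
  rw [genInt, genInt, genInt, iSup_congr key]
  apply le_antisymm
  · exact ciSup_le fun t => max_le_max (le_ciSup (bdd f) t) (le_ciSup (bdd g) t)
  · exact max_le (ciSup_mono bddmax fun t => le_max_left _ _)
      (ciSup_mono bddmax fun t => le_max_right _ _)
end

section
/- There exist a capacity μ on a two-point space X = {a, b} and comonotone functions f, g : X → [0,1] such that the Shilkret integral satisfies I_Π(μ, min(f,g)) < min(I_Π(μ, f), I_Π(μ, g)). Concretely, with μ({a}) = 0.5, μ({b}) = β for any β ∈ [0,1], μ(X) = 1, f(a) = 1, f(b) = 0.4, g(a) = 0.8, g(b) = 0.6, one has I_Π(μ, f) = 0.5, I_Π(μ, g) = 0.6, and I_Π(μ, min(f,g)) = 0.4. -/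
open Set

lemma bool_set_cases (A : Set Bool) : A = ∅ ∨ A = {true} ∨ A = {false} ∨ A = univ := by
  by_cases ht : true ∈ A <;> by_cases hf : false ∈ A
  · right; right; right; ext x; cases x <;> simp [ht, hf]
  · right; left; ext x; cases x <;> simp [ht, hf]
  · right; right; left; ext x; cases x <;> simp [ht, hf]
  · left; ext x; cases x <;> simp [ht, hf]

lemma univ_ne_t : (univ : Set Bool) ≠ {true} := by
  intro h; have : (false:Bool) ∈ ({true}:Set Bool) := h ▸ mem_univ false
  simp at this

lemma univ_ne_f : (univ : Set Bool) ≠ {false} := by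
  intro h; have : (true:Bool) ∈ ({false}:Set Bool) := h ▸ mem_univ true
  simp at this

noncomputable def μβ (β : ℝ) : Set Bool → ℝ := fun A => open scoped Classical in
      if A = (∅ : Set Bool) then 0 else if A = {true} then 0.5
      else if A = {false} then β else 1

lemma μ_empty (β : ℝ) : μβ β ∅ = 0 := by simp [μβ]
lemma μ_t (β : ℝ) : μβ β {true} = 0.5 := by simp [μβ]
lemma μ_f (β : ℝ) : μβ β {false} = β := by simp [μβ]
lemma μ_univ (β : ℝ) : μβ β univ = 1 := by
  rw [μβ, if_neg (Set.univ_nonempty).ne_empty, if_neg univ_ne_t, if_neg univ_ne_f]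

lemma myciSup_eq {F : ℝ → ℝ} {c : ℝ} (hb : ∀ t ∈ Icc (0:ℝ) 1, F t ≤ c)
    {t0 : ℝ} (ht0 : t0 ∈ Icc (0:ℝ) 1) (h0 : F t0 = c) :
    (⨆ t : Icc (0:ℝ) 1, F (t:ℝ)) = c := by
  apply le_antisymm
  · exact ciSup_le fun t => hb t t.2
  · calc c = F t0 := h0.symm
      _ ≤ _ := le_ciSup ⟨c, by rintro y ⟨t, rfl⟩; exact hb t t.2⟩ (⟨t0, ht0⟩ : Icc (0:ℝ) 1)

def f0 : Bool → ℝ := fun x => if x then 1 else 0.4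
def g0 : Bool → ℝ := fun x => if x then 0.8 else 0.6

lemma cap (β : ℝ) (hβ : β ∈ Icc (0:ℝ) 1) : Capacity (μβ β) := by
  refine ⟨?_, ?_, μ_empty β, μ_univ β⟩
  · intro A
    rcases bool_set_cases A with rfl|rfl|rfl|rfl <;>
      simp only [μ_empty, μ_t, μ_f, μ_univ] <;>
      first
        | exact hβ
        | (constructor <;> norm_num)
  · intro A B hAB
    rcases bool_set_cases A with rfl|rfl|rfl|rfl <;> rcases bool_set_cases B with rfl|rfl|rfl|rfl <;>
      simp only [μ_empty, μ_t, μ_f, μ_univ] <;>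
      first
        | linarith [hβ.1, hβ.2]
        | (have := hAB (mem_singleton true); simp at this; done)
        | (have := hAB (mem_singleton false); simp at this; done)
        | (have := hAB (mem_univ true); simp at this; done)
        | (have := hAB (mem_univ false); simp at this; done)
        | norm_num

lemma int_f (β : ℝ) (hβ : β ∈ Icc (0:ℝ) 1) :
    genInt (fun t m => t * m) (μβ β) f0 = 0.5 := by
  rw [genInt]
  refine myciSup_eq (F := fun s => s * μβ β {x | s ≤ f0 x}) ?_ (t0 := 1) (by norm_num) ?_
  · intro t ht
    obtain ⟨ht0, ht1⟩ := ht
    rcases le_or_gt t 0.4 with h|h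
    · have hs : {x : Bool | t ≤ f0 x} = univ := by
        ext x; cases x <;> simp [f0] <;> linarith
      simp only [hs, μ_univ]; linarith
    · have hs : {x : Bool | t ≤ f0 x} = {true} := by
        ext x; cases x <;> simp [f0] <;> linarith
      simp only [hs, μ_t]; linarith
  · have hs : {x : Bool | (1:ℝ) ≤ f0 x} = {true} := by
      ext x; cases x <;> simp [f0] <;> norm_num
    simp only [hs, μ_t]; norm_num

lemma int_g (β : ℝ) (hβ : β ∈ Icc (0:ℝ) 1) :
    genInt (fun t m => t * m) (μβ β) g0 = 0.6 := by
  rw [genInt]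
  refine myciSup_eq (F := fun s => s * μβ β {x | s ≤ g0 x}) ?_ (t0 := 0.6) (by norm_num) ?_
  · intro t ht
    obtain ⟨ht0, ht1⟩ := ht
    rcases le_or_gt t 0.6 with h|h
    · have hs : {x : Bool | t ≤ g0 x} = univ := by
        ext x; cases x <;> simp [g0] <;> linarith
      simp only [hs, μ_univ]; linarith
    · rcases le_or_gt t 0.8 with h2|h2
      · have hs : {x : Bool | t ≤ g0 x} = {true} := by
          ext x; cases x <;> simp [g0] <;> linarith
        simp only [hs, μ_t]; linarith
      · have hs : {x : Bool | t ≤ g0 x} = ∅ := by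
          ext x; cases x <;> simp [g0] <;> linarith
        simp only [hs, μ_empty]; linarith
  · have hs : {x : Bool | (0.6:ℝ) ≤ g0 x} = univ := by
      ext x; cases x <;> simp [g0] <;> norm_num
    simp only [hs, μ_univ]; norm_num

lemma int_min (β : ℝ) (hβ : β ∈ Icc (0:ℝ) 1) :
    genInt (fun t m => t * m) (μβ β) (fun x => min (f0 x) (g0 x)) = 0.4 := by
  rw [genInt]
  refine myciSup_eq (F := fun s => s * μβ β {x | s ≤ min (f0 x) (g0 x)}) ?_ (t0 := 0.4)
    (by norm_num) ?_
  · intro t ht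
    obtain ⟨ht0, ht1⟩ := ht
    rcases le_or_gt t 0.4 with h|h
    · have hs : {x : Bool | t ≤ min (f0 x) (g0 x)} = univ := by
        ext x; cases x <;> simp [f0, g0, le_min_iff] <;> constructor <;> linarith
      simp only [hs, μ_univ]; linarith
    · rcases le_or_gt t 0.8 with h2|h2
      · have hs : {x : Bool | t ≤ min (f0 x) (g0 x)} = {true} := by
          ext x; cases x <;> simp [f0, g0, le_min_iff] <;> first | (constructor <;> linarith) | (intro; linarith)
        simp only [hs, μ_t]; linarith
      · have hs : {x : Bool | t ≤ min (f0 x) (g0 x)} = ∅ := by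
          ext x; cases x <;> simp [f0, g0, le_min_iff] <;> intro <;> linarith
        simp only [hs, μ_empty]; linarith
  · have hs : {x : Bool | (0.4:ℝ) ≤ min (f0 x) (g0 x)} = univ := by
      ext x; cases x <;> simp [f0, g0, le_min_iff] <;> norm_num
    simp only [hs, μ_univ]; norm_num

lemma main (β : ℝ) (hβ : β ∈ Icc (0:ℝ) 1) :
    Capacity (μβ β) ∧ Comonotone f0 g0 ∧
    genInt (fun t m => t * m) (μβ β) f0 = 0.5 ∧
    genInt (fun t m => t * m) (μβ β) g0 = 0.6 ∧
    genInt (fun t m => t * m) (μβ β) (fun x => min (f0 x) (g0 x)) = 0.4 ∧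
    genInt (fun t m => t * m) (μβ β) (fun x => min (f0 x) (g0 x)) <
      min (genInt (fun t m => t * m) (μβ β) f0) (genInt (fun t m => t * m) (μβ β) g0) := by
  refine ⟨cap β hβ, ?_, int_f β hβ, int_g β hβ, int_min β hβ, ?_⟩
  · intro x y; cases x <;> cases y <;> simp [f0, g0] <;> norm_num
  · rw [int_f β hβ, int_g β hβ, int_min β hβ]; norm_num

theorem stmt11 (β : ℝ) (hβ : β ∈ Icc (0:ℝ) 1) :
    let Pi : ℝ → ℝ → ℝ := fun t m => t * m
    let μ : Set Bool → ℝ := fun A => open scoped Classical in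
      if A = (∅ : Set Bool) then 0 else if A = {true} then 0.5
      else if A = {false} then β else 1
    let f : Bool → ℝ := fun x => if x then 1 else 0.4
    let g : Bool → ℝ := fun x => if x then 0.8 else 0.6
    Capacity μ ∧ Comonotone f g ∧
    genInt Pi μ f = 0.5 ∧ genInt Pi μ g = 0.6 ∧
    genInt Pi μ (fun x => min (f x) (g x)) = 0.4 ∧
    genInt Pi μ (fun x => min (f x) (g x)) < min (genInt Pi μ f) (genInt Pi μ g) := by exact main β hβ
end

section
/- For any semicopula S, any a ∈ (0,1], any capacity μ, and any measurable f : X → [0,1] with f + a ≤ 1, the generalized Sugeno integral satisfies I_S(μ, f + a) = sup_{t ∈ [0, 1−a]} S(t + a, μ({f ≥ t})); in particular I_S(μ, f + a) ≥ a. -/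
open Set

theorem stmt13 {X : Type} (S : ℝ → ℝ → ℝ) (hS : Semicopula S)
    (μ : Set X → ℝ) (hμ : Capacity μ) (a : ℝ) (ha : a ∈ Ioc (0:ℝ) 1)
    (f : X → ℝ) (hf : ∀ x, f x ∈ Icc (0:ℝ) 1) (hfa : ∀ x, f x + a ≤ 1) :
    genInt S μ (fun x => f x + a) =
      (⨆ t : Icc (0:ℝ) (1 - a), S ((t:ℝ) + a) (μ {x | (t:ℝ) ≤ f x})) ∧
    a ≤ genInt S μ (fun x => f x + a) := by
  obtain ⟨hS1, hS2, hS3, hS4⟩ := hS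
  obtain ⟨hμ1, hμ2, hμ0, hμU⟩ := hμ
  obtain ⟨ha0, ha1⟩ := ha
  -- boundedness
  have hbdd1 : BddAbove (range fun t : Icc (0:ℝ) 1 =>
      S (t:ℝ) (μ {x | (t:ℝ) ≤ f x + a})) := by
    refine ⟨1, ?_⟩
    rintro y ⟨⟨t, ht0, ht1⟩, rfl⟩
    exact (hS1 t ⟨ht0, ht1⟩ _ (hμ1 _)).2
  have hbdd2 : BddAbove (range fun t : Icc (0:ℝ) (1 - a) =>
      S ((t:ℝ) + a) (μ {x | (t:ℝ) ≤ f x})) := by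
    refine ⟨1, ?_⟩
    rintro y ⟨⟨t, ht0, ht1⟩, rfl⟩
    exact (hS1 (t + a) ⟨by linarith, by linarith⟩ _ (hμ1 _)).2
  have hne1 : Nonempty (Icc (0:ℝ) 1) := ⟨⟨0, by norm_num⟩⟩
  have hne2 : Nonempty (Icc (0:ℝ) (1 - a)) := ⟨⟨0, le_refl 0, by linarith⟩⟩
  have hzero : μ {x | (0:ℝ) ≤ f x} = 1 := by
    have : {x | (0:ℝ) ≤ f x} = univ := eq_univ_of_forall fun x => (hf x).1
    rw [this, hμU]
  have ha' : a = S ((0:ℝ) + a) (μ {x | (0:ℝ) ≤ f x}) := by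
    rw [hzero, zero_add, (hS4 a ⟨le_of_lt ha0, ha1⟩).1]
  have haRHS : a ≤ ⨆ t : Icc (0:ℝ) (1 - a), S ((t:ℝ) + a) (μ {x | (t:ℝ) ≤ f x}) := by
    exact ha'.le.trans (le_ciSup hbdd2 ⟨0, le_refl 0, by linarith⟩)
  have hmain : genInt S μ (fun x => f x + a) =
      ⨆ t : Icc (0:ℝ) (1 - a), S ((t:ℝ) + a) (μ {x | (t:ℝ) ≤ f x}) := by
    unfold genInt
    apply le_antisymm
    · apply ciSup_le
      rintro ⟨t, ht0, ht1⟩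
      simp only
      rcases le_or_gt t a with h | h
      · have hset : {x | t ≤ f x + a} = univ :=
          eq_univ_of_forall fun x => by have := (hf x).1; simp only [mem_setOf_eq]; linarith
        rw [hset, hμU, (hS4 t ⟨ht0, ht1⟩).1]
        exact le_trans h haRHS
      · have hset : {x | t ≤ f x + a} = {x | t - a ≤ f x} := by
          ext x; simp only [mem_setOf_eq]; constructor <;> intro <;> linarith
        have : S t (μ {x | t ≤ f x + a}) = S ((t - a) + a) (μ {x | t - a ≤ f x}) := by
          rw [hset, sub_add_cancel]
        rw [this]
        exact le_ciSup hbdd2 ⟨t - a, by linarith, by linarith⟩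
    · apply ciSup_le
      rintro ⟨s, hs0, hs1⟩
      simp only
      have hset : {x | s + a ≤ f x + a} = {x | s ≤ f x} := by
        ext x; simp only [mem_setOf_eq]; constructor <;> intro <;> linarith
      have : S (s + a) (μ {x | s ≤ f x}) = S (s + a) (μ {x | s + a ≤ f x + a}) := by
        rw [hset]
      rw [this]
      exact le_ciSup hbdd1 ⟨s + a, by linarith, by linarith⟩
  exact ⟨hmain, hmain ▸ haRHS⟩
end
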